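/- For every function f : A → ℤ/pℤ, the element (α_f, 1) of M ⋊ G, where α_f(g, a) = f(a) for all g ∈ G and a ∈ A, belongs to the subgroup H and lies in the center of H. -/

import Mathlib

open Multiplicative

/-- The shift action of `g : G` on functions `(G × A) → R`:
`(g · α)(h, a) = α (g⁻¹h, a)`. -/
def cayAct {G A : Type*} (R : Type*) [Group G] [AddCommGroup R] (g : G) :
    ((G × A) → R) ≃+ ((G × A) → R) where
  toFun α := fun x => α (g⁻¹ * x.1, x.2)
  invFun α := fun x => α (g * x.1, x.2)
  left_inv := by intro α; funext x; simp
  right_inv := by intro α; funext x; simp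
  map_add' := by intro α β; rfl

/-- The action of `G` on the (multiplicatively written) additive group `M` of
functions `(G × A) → R`, as a homomorphism into the automorphism group; it is
used to form the semidirect product `M ⋊ G`. -/
def cayHom (G A R : Type*) [Group G] [AddCommGroup R] :
    G →* MulAut (Multiplicative ((G × A) → R)) where
  toFun g := AddEquiv.toMultiplicative (cayAct R g)
  map_one' := by
    apply MulEquiv.ext
    intro α
    apply Multiplicative.toAdd.injective
    funext x
    simp [cayAct, AddEquiv.toMultiplicative]
  map_mul' := by
    intro g h
    apply MulEquiv.ext
    intro α
    apply Multiplicative.toAdd.injective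
    funext x
    simp [cayAct, AddEquiv.toMultiplicative, mul_assoc]

/-- The generator `(δ_{(1,a)}, φ a)` of `M ⋊ G`. -/
def cayGen {G A : Type*} (R : Type*) [Group G] [AddCommGroup R] [One R]
    [DecidableEq G] [DecidableEq A] (φ : A → G) (a : A) :
    Multiplicative ((G × A) → R) ⋊[cayHom G A R] G :=
  ⟨ofAdd (fun x => if x = ((1 : G), a) then (1 : R) else 0), φ a⟩

/-- The model `H` of the universal Gaschütz `p`-extension `G^{ℤ/p}`: the subgroup
of `M ⋊ G` generated by the elements `(δ_{(1,a)}, φ a)` for `a ∈ A`. -/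
def gaschutzH (G A : Type*) [Group G] [DecidableEq G] [DecidableEq A]
    (p : ℕ) (φ : A → G) :
    Subgroup (Multiplicative ((G × A) → ZMod p) ⋊[cayHom G A (ZMod p)] G) :=
  Subgroup.closure (Set.range (cayGen (ZMod p) φ))


section A1
variable {G A : Type*} [Group G] [DecidableEq G] [DecidableEq A] {p : ℕ}

lemma cayHom_apply (g : G) (α : (G × A) → ZMod p) :
    (cayHom G A (ZMod p) g) (ofAdd α) = ofAdd (fun x => α (g⁻¹ * x.1, x.2)) := rfl

end A1

lemma key_count {G : Type*} [Group G] [Fintype G] [DecidableEq G] (p : ℕ) (s : G)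
    [Fintype (G ⧸ Subgroup.zpowers s)] (x1 : G) :
    ∑ q : G ⧸ Subgroup.zpowers s, ∑ j ∈ Finset.range (orderOf s),
      (if q.out⁻¹ * x1 = s ^ j then (1 : ZMod p) else 0) = 1 := by
  classical
  have h1 : ∀ y : G, (∑ j ∈ Finset.range (orderOf s), if y = s ^ j then (1 : ZMod p) else 0)
      = if y ∈ Submonoid.powers s then 1 else 0 := by
    intro y
    rw [← Fin.sum_univ_eq_sum_range (fun j => if y = s ^ j then (1 : ZMod p) else 0)]
    have hfin : IsOfFinOrder s := isOfFinOrder_of_finite s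
    calc ∑ j : Fin (orderOf s), (if y = s ^ (j : ℕ) then (1 : ZMod p) else 0)
        = ∑ z : Submonoid.powers s, (if y = (z : G) then (1 : ZMod p) else 0) := by
          rw [← Equiv.sum_comp (finEquivPowers hfin)
            (fun z => if y = (z : G) then (1 : ZMod p) else 0)]
          exact Finset.sum_congr rfl fun j _ => by rw [finEquivPowers_apply]
      _ = if y ∈ Submonoid.powers s then 1 else 0 := by
          by_cases hy : y ∈ Submonoid.powers s
          · rw [if_pos hy,
              Finset.sum_eq_single_of_mem (⟨y, hy⟩ : Submonoid.powers s) (Finset.mem_univ _)]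
            · simp
            · intro z _ hz
              rw [if_neg]
              exact fun h => hz (Subtype.ext h.symm)
          · rw [if_neg hy]
            apply Finset.sum_eq_zero
            intro z _
            rw [if_neg]
            exact fun h => hy (h ▸ z.2)
  rw [Finset.sum_congr rfl fun q _ => h1 (q.out⁻¹ * x1)]
  have h2 : ∀ q : G ⧸ Subgroup.zpowers s,
      (q.out⁻¹ * x1 ∈ Submonoid.powers s) ↔ q = (x1 : G ⧸ Subgroup.zpowers s) := by
    intro q
    rw [mem_powers_iff_mem_zpowers, ← QuotientGroup.eq, QuotientGroup.out_eq']
  simp only [h2]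
  rw [Finset.sum_ite_eq' Finset.univ ((x1 : G ⧸ Subgroup.zpowers s)) (fun _ => (1 : ZMod p))]
  simp

section A2
variable {G A : Type*} [Group G] [DecidableEq G] [DecidableEq A] {p : ℕ} {φ : A → G}

set_option linter.unusedSectionVars false

lemma cayGen_pow (a : A) (k : ℕ) :
    (cayGen (ZMod p) φ a) ^ k =
      ⟨ofAdd (fun x : G × A => ∑ j ∈ Finset.range k,
        if x.1 = (φ a) ^ j ∧ x.2 = a then (1 : ZMod p) else 0), (φ a) ^ k⟩ := by
  induction k with
  | zero =>
    apply SemidirectProduct.ext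
    · show (1 : Multiplicative ((G × A) → ZMod p)) = _
      apply Multiplicative.toAdd.injective
      funext x
      simp
    · simp
  | succ k ih =>
    rw [pow_succ, ih, SemidirectProduct.mul_def]
    apply SemidirectProduct.ext
    · show _ * (cayHom G A (ZMod p)) ((φ a) ^ k) (cayGen (ZMod p) φ a).left = _
      rw [show (cayGen (ZMod p) φ a).left
          = ofAdd (fun x : G × A => if x = ((1 : G), a) then (1 : ZMod p) else 0) from rfl,
        cayHom_apply]
      apply Multiplicative.toAdd.injective
      funext x
      show (∑ j ∈ Finset.range k, if x.1 = (φ a) ^ j ∧ x.2 = a then (1 : ZMod p) else 0)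
          + (if (((φ a) ^ k)⁻¹ * x.1, x.2) = ((1 : G), a) then (1 : ZMod p) else 0)
          = ∑ j ∈ Finset.range (k + 1), if x.1 = (φ a) ^ j ∧ x.2 = a then (1 : ZMod p) else 0
      rw [Finset.sum_range_succ]
      congr 1
      simp [Prod.ext_iff, inv_mul_eq_one, eq_comm]
    · show (φ a) ^ k * (φ a) = (φ a) ^ (k + 1)
      rw [pow_succ]

lemma right_surj (hgen : Subgroup.closure (Set.range φ) = ⊤) (g : G) :
    ∃ h ∈ gaschutzH G A p φ, h.right = g := by
  have hmap : (gaschutzH G A p φ).map SemidirectProduct.rightHom = ⊤ := by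
    rw [gaschutzH, MonoidHom.map_closure]
    rw [show ⇑SemidirectProduct.rightHom '' Set.range (cayGen (ZMod p) φ) = Set.range φ by
      rw [← Set.range_comp]; rfl]
    exact hgen
  have : g ∈ (gaschutzH G A p φ).map SemidirectProduct.rightHom := by
    rw [hmap]; trivial
  obtain ⟨h, hh, hr⟩ := this
  exact ⟨h, hh, hr⟩

lemma conj_mem (hgen : Subgroup.closure (Set.range φ) = ⊤) (g : G) (α : (G × A) → ZMod p)
    (hα : (⟨ofAdd α, 1⟩ : Multiplicative ((G × A) → ZMod p) ⋊[cayHom G A (ZMod p)] G)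
      ∈ gaschutzH G A p φ) :
    (⟨ofAdd (fun x => α (g⁻¹ * x.1, x.2)), 1⟩ :
      Multiplicative ((G × A) → ZMod p) ⋊[cayHom G A (ZMod p)] G) ∈ gaschutzH G A p φ := by
  obtain ⟨h, hH, hr⟩ := right_surj (p := p) hgen g
  have hm := (gaschutzH G A p φ).mul_mem ((gaschutzH G A p φ).mul_mem hH hα)
    ((gaschutzH G A p φ).inv_mem hH)
  have key : h * ⟨ofAdd α, 1⟩ * h⁻¹
      = (⟨ofAdd (fun x => α (g⁻¹ * x.1, x.2)), 1⟩ :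
        Multiplicative ((G × A) → ZMod p) ⋊[cayHom G A (ZMod p)] G) := by
    apply SemidirectProduct.ext
    · show h.left * (cayHom G A (ZMod p)) h.right (ofAdd α)
          * (cayHom G A (ZMod p)) (h.right * 1) ((cayHom G A (ZMod p)) h.right⁻¹ h.left⁻¹) = _
      rw [mul_one, ← MulAut.mul_apply, ← map_mul, mul_inv_cancel, map_one, MulAut.one_apply]
      rw [mul_comm, ← mul_assoc, inv_mul_cancel, one_mul, hr, cayHom_apply]
    · simp [hr]
  rw [← key]
  exact hm

end A2

/-- For every `f : A → ℤ/pℤ`, the element `(α_f, 1)` with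
`α_f(g, a) = f a` belongs to `H` and is central in `H`. -/
theorem constant_function_gives_central_element
    {G A : Type*} [Group G] [Fintype G] [Fintype A] [DecidableEq G] [DecidableEq A]
    (hA : 2 ≤ Fintype.card A)
    (p : ℕ) (hp : p.Prime)
    (φ : A → G) (hgen : Subgroup.closure (Set.range φ) = ⊤)
    (f : A → ZMod p) :
    (⟨ofAdd (fun x : G × A => f x.2), (1 : G)⟩ :
        Multiplicative ((G × A) → ZMod p) ⋊[cayHom G A (ZMod p)] G) ∈ gaschutzH G A p φ ∧
    ∀ x ∈ gaschutzH G A p φ,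
      Commute (⟨ofAdd (fun x : G × A => f x.2), (1 : G)⟩ :
        Multiplicative ((G × A) → ZMod p) ⋊[cayHom G A (ZMod p)] G) x := by
  haveI : NeZero p := ⟨hp.ne_zero⟩
  set K : Subgroup (Multiplicative ((G × A) → ZMod p)) :=
    (gaschutzH G A p φ).comap SemidirectProduct.inl with hK
  have hKmem : ∀ α : (G × A) → ZMod p, ofAdd α ∈ K ↔
      (⟨ofAdd α, (1 : G)⟩ :
        Multiplicative ((G × A) → ZMod p) ⋊[cayHom G A (ZMod p)] G) ∈ gaschutzH G A p φ := by
    intro α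
    rw [hK, Subgroup.mem_comap]
    rfl
  constructor
  · -- membership
    have hstep : ∀ a : A,
        ofAdd (fun x : G × A => if x.2 = a then (1 : ZMod p) else 0) ∈ K := by
      intro a
      haveI : Fintype (G ⧸ Subgroup.zpowers (φ a)) := Fintype.ofFinite _
      have hgen' : cayGen (ZMod p) φ a ∈ gaschutzH G A p φ :=
        Subgroup.subset_closure (Set.mem_range_self a)
      have hbase := (gaschutzH G A p φ).pow_mem hgen' (orderOf (φ a))
      rw [cayGen_pow, pow_orderOf_eq_one] at hbase
      have hq : ∀ q : G ⧸ Subgroup.zpowers (φ a),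
          ofAdd (fun x : G × A => ∑ j ∈ Finset.range (orderOf (φ a)),
            if q.out⁻¹ * x.1 = (φ a) ^ j ∧ x.2 = a then (1 : ZMod p) else 0) ∈ K :=
        fun q => (hKmem _).mpr (conj_mem hgen q.out _ hbase)
      have hsum : ofAdd (∑ q : G ⧸ Subgroup.zpowers (φ a), fun x : G × A =>
            ∑ j ∈ Finset.range (orderOf (φ a)),
            if q.out⁻¹ * x.1 = (φ a) ^ j ∧ x.2 = a then (1 : ZMod p) else 0) ∈ K := by
        rw [ofAdd_sum]
        exact Subgroup.prod_mem K fun q _ => hq q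
      have heq : (∑ q : G ⧸ Subgroup.zpowers (φ a), fun x : G × A =>
            ∑ j ∈ Finset.range (orderOf (φ a)),
            if q.out⁻¹ * x.1 = (φ a) ^ j ∧ x.2 = a then (1 : ZMod p) else 0)
          = fun x : G × A => if x.2 = a then (1 : ZMod p) else 0 := by
        funext x
        rw [Finset.sum_apply]
        by_cases hx : x.2 = a
        · simp only [hx, and_true, if_pos rfl]
          exact key_count p (φ a) x.1
        · simp [hx]
      rw [← heq]
      exact hsum
    have hfinal : (fun x : G × A => f x.2)
        = ∑ a : A, fun x : G × A =>
          (f a).val • (if x.2 = a then (1 : ZMod p) else 0) := by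
      funext x
      rw [Finset.sum_apply]
      have h3 : ∀ a : A, (f a).val • (if x.2 = a then (1 : ZMod p) else 0)
          = if x.2 = a then f a else 0 := by
        intro a
        split
        · rw [nsmul_eq_mul, mul_one]
          exact ZMod.natCast_rightInverse (f a)
        · rw [smul_zero]
      rw [Finset.sum_congr rfl fun a _ => h3 a, Finset.sum_ite_eq]
      simp
    rw [← hKmem, hfinal, ofAdd_sum]
    apply Subgroup.prod_mem
    intro a _
    rw [show (fun x : G × A => (f a).val • if x.2 = a then (1 : ZMod p) else 0)
        = (f a).val • (fun x : G × A => if x.2 = a then (1 : ZMod p) else 0) from rfl,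
      ofAdd_nsmul]
    exact K.pow_mem (hstep a) _
  · -- centrality
    intro x hx
    show _ * x = x * _
    apply SemidirectProduct.ext
    · show ofAdd (fun y : G × A => f y.2) * (cayHom G A (ZMod p)) 1 x.left
        = x.left * (cayHom G A (ZMod p)) x.right (ofAdd (fun y : G × A => f y.2))
      rw [map_one, MulAut.one_apply, cayHom_apply]
      exact mul_comm _ _
    · show 1 * x.right = x.right * 1
      rw [one_mul, mul_one]
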